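/- Let M = (M_p)_{p∈ℕ} be a positive sequence such that both M and its conjugate M* (defined by M*_p := p!/M_p) are log-convex. Then M satisfies the moderate growth condition: there exists C ≥ 1 such that M_{p+q} ≤ C^{p+q+1} M_p M_q for all p, q ∈ ℕ. -/
import Mathlib

theorem stmt10 (M : ℕ → ℝ) (hpos : ∀ p, 0 < M p)
    (hlcM : ∀ p : ℕ, 1 ≤ p → (M p) ^ 2 ≤ M (p - 1) * M (p + 1))
    (hlcMstar : ∀ p : ℕ, 1 ≤ p →
      ((Nat.factorial p : ℝ) / M p) ^ 2
        ≤ ((Nat.factorial (p - 1) : ℝ) / M (p - 1)) * ((Nat.factorial (p + 1) : ℝ) / M (p + 1))) :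
    ∃ C : ℝ, 1 ≤ C ∧ ∀ p q : ℕ, M (p + q) ≤ C ^ (p + q + 1) * (M p * M q) := by
  -- Lemma A: ratio M(k+1)/M k grows slower than linearly
  have hA : ∀ k : ℕ, ((k:ℝ)+1) * (M k * M (k+2)) ≤ ((k:ℝ)+2) * (M (k+1))^2 := by
    intro k
    have h := hlcMstar (k+1) (by omega)
    simp only [Nat.add_sub_cancel] at h
    rw [div_pow, div_mul_div_comm,
      div_le_div_iff₀ (pow_pos (hpos _) 2) (mul_pos (hpos _) (hpos _))] at h
    have e1 : (Nat.factorial (k+1) : ℝ) = ((k:ℝ)+1) * Nat.factorial k := by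
      push_cast [Nat.factorial_succ]; ring
    have e2 : (Nat.factorial (k+2) : ℝ) = ((k:ℝ)+2) * (((k:ℝ)+1) * Nat.factorial k) := by
      push_cast [Nat.factorial_succ]; ring
    rw [e1, e2] at h
    have hk : (0:ℝ) < ((k:ℝ)+1) * (Nat.factorial k : ℝ)^2 := by
      have := Nat.factorial_pos k
      positivity
    refine le_of_mul_le_mul_left ?_ hk
    nlinarith [h]
  -- Lemma B
  have hB : ∀ p k : ℕ,
      ((k:ℝ)+1) * (M (p+k+1) * M k) ≤ ((p:ℝ)+(k:ℝ)+1) * (M (p+k) * M (k+1)) := by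
    intro p
    induction p with
    | zero => intro k; simp; exact le_of_eq (by ring)
    | succ p ih =>
      intro k
      have IH := ih k
      have A := hA (p+k)
      have hkey := mul_le_mul IH A
        (mul_nonneg (by positivity) (le_of_lt (mul_pos (hpos _) (hpos _))))
        (mul_nonneg (by positivity) (le_of_lt (mul_pos (hpos _) (hpos _))))
      have hP : (0:ℝ) < ((p:ℝ)+(k:ℝ)+1) * (M (p+k) * M (p+k+1)) :=
        mul_pos (by positivity) (mul_pos (hpos _) (hpos _))
      have e : (p+1+k : ℕ) = p+k+1 := by omega
      rw [e]
      push_cast at hkey ⊢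
      refine le_of_mul_le_mul_left ?_ hP
      have e2 : (p+k+1+1 : ℕ) = p+k+2 := by omega
      rw [e2]
      nlinarith [hkey]
  -- Lemma C
  have hC : ∀ p q : ℕ, M (p+q) * M 0 * ((Nat.factorial q : ℝ) * Nat.factorial p)
      ≤ (Nat.factorial (p+q) : ℝ) * (M p * M q) := by
    intro p q
    induction q with
    | zero => simp [Nat.factorial]; exact le_of_eq (by ring)
    | succ q ih =>
      have B := hB p q
      have hQ : (0:ℝ) < M (p+q) * M q := mul_pos (hpos _) (hpos _)
      have hkey := mul_le_mul ih B
        (mul_nonneg (by positivity) (le_of_lt (mul_pos (hpos _) (hpos _))))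
        (le_of_lt (mul_pos (by exact_mod_cast (p+q).factorial_pos)
          (mul_pos (hpos _) (hpos _))))
      have e1 : (Nat.factorial (q+1) : ℝ) = ((q:ℝ)+1) * Nat.factorial q := by
        push_cast [Nat.factorial_succ]; ring
      have e2 : (Nat.factorial (p+q+1) : ℝ) = ((p:ℝ)+(q:ℝ)+1) * Nat.factorial (p+q) := by
        push_cast [Nat.factorial_succ]; ring
      have e3 : (p + (q+1) : ℕ) = p+q+1 := by omega
      rw [e3, e1, e2]
      refine le_of_mul_le_mul_left ?_ hQ
      nlinarith [hkey]
  -- choose the constant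
  refine ⟨max 2 (1 / M 0), le_trans one_le_two (le_max_left _ _), fun p q => ?_⟩
  set C := max 2 (1 / M 0) with hCdef
  have hC2 : (2:ℝ) ≤ C := le_max_left _ _
  have hCM : 1 / M 0 ≤ C := le_max_right _ _
  have hC0 : (0:ℝ) < C := lt_of_lt_of_le two_pos hC2
  have hM0 : (0:ℝ) < M 0 := hpos 0
  -- binomial bound
  have hbinom : (Nat.factorial (p+q) : ℝ)
      ≤ 2 ^ (p+q) * ((Nat.factorial p : ℝ) * Nat.factorial q) := by
    have h1 : (p+q).choose p ≤ 2 ^ (p+q) := by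
      calc (p+q).choose p ≤ ∑ m ∈ Finset.range (p+q+1), (p+q).choose m :=
            Finset.single_le_sum (fun i _ => Nat.zero_le _)
              (Finset.mem_range.mpr (by omega))
        _ = 2 ^ (p+q) := Nat.sum_range_choose (p+q)
    have h2 : (p+q).factorial = (p+q).choose p * (p.factorial * q.factorial) := by
      rw [← Nat.add_choose_mul_factorial_mul_factorial p q, Nat.choose_symm_add]; ring
    calc (Nat.factorial (p+q) : ℝ)
        = ((p+q).choose p : ℝ) * ((Nat.factorial p : ℝ) * Nat.factorial q) := by
          exact_mod_cast congrArg (Nat.cast (R := ℝ)) h2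
      _ ≤ 2 ^ (p+q) * ((Nat.factorial p : ℝ) * Nat.factorial q) := by
          have h1' : ((p+q).choose p : ℝ) ≤ 2 ^ (p+q) := by exact_mod_cast h1
          have hfnn : (0:ℝ) ≤ (Nat.factorial p : ℝ) * Nat.factorial q := by positivity
          exact mul_le_mul_of_nonneg_right h1' hfnn
  have hfpq : (0:ℝ) < (Nat.factorial q : ℝ) * Nat.factorial p := by
    have := Nat.factorial_pos p; have := Nat.factorial_pos q; positivity
  have h5 : M (p+q) * M 0 ≤ 2 ^ (p+q) * (M p * M q) := by
    refine le_of_mul_le_mul_right ?_ hfpq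
    have h6 := mul_le_mul_of_nonneg_right hbinom
      (le_of_lt (mul_pos (hpos p) (hpos q)))
    nlinarith [hC p q]
  have h7 : (2:ℝ)^(p+q) ≤ C^(p+q) := pow_le_pow_left₀ (by norm_num) hC2 _
  have h8 : M (p+q) ≤ (1 / M 0) * 2 ^ (p+q) * (M p * M q) := by
    rw [div_mul_eq_mul_div, div_mul_eq_mul_div, le_div_iff₀ hM0]
    nlinarith [h5]
  calc M (p+q) ≤ (1 / M 0) * 2 ^ (p+q) * (M p * M q) := h8
    _ ≤ C * C ^ (p+q) * (M p * M q) := by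
        refine mul_le_mul_of_nonneg_right ?_ (le_of_lt (mul_pos (hpos p) (hpos q)))
        exact mul_le_mul hCM h7 (by positivity) hC0.le
    _ = C ^ (p+q+1) * (M p * M q) := by rw [pow_succ]; ring
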